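/- Let β₁, β₂, δ₁, δ₂ ≥ 0 with β₁+δ₁ > 0, β₂+δ₂ > 0, and α₁, α₂, γ₁, γ₂ > 0. Suppose |A_n| ≤ (n+1)/2 and |B_n| ≤ (n−1)/2 for n ≥ 2. If W''_{(α₁,β₁),(γ₁,δ₁)}(1) + 2 W'_{(α₁,β₁),(γ₁,δ₁)}(1) + W''_{(α₂,β₂),(γ₂,δ₂)}(1) ≤ 4, then for every complex ε with |ε| = 1, ∑_{n=2}^∞ n|t_n| ≤ 1, where t_n = Γ(α₁)Γ(γ₁)A_n /(Γ(α₁+(n−1)β₁)Γ(γ₁+(n−1)δ₁)) + ε Γ(α₂)Γ(γ₂)B_n /(Γ(α₂+(n−1)β₂)Γ(γ₂+(n−1)δ₂)). -/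

import Mathlib

open Real Filter

/-- coefficient sequence -/
noncomputable def cw (a b c d : ℝ) (n : ℕ) : ℝ :=
  Real.Gamma a * Real.Gamma c /
    (Real.Gamma (a + ((n : ℝ) + 1) * b) * Real.Gamma (c + ((n : ℝ) + 1) * d))

lemma cw_pos {a b c d : ℝ} (ha : 0 < a) (hc : 0 < c) (hb : 0 ≤ b) (hd : 0 ≤ d) (n : ℕ) :
    0 < cw a b c d n := by
  have h1 : 0 < a + ((n : ℝ) + 1) * b := by positivity
  have h2 : 0 < c + ((n : ℝ) + 1) * d := by positivity
  exact div_pos (mul_pos (Real.Gamma_pos_of_pos ha) (Real.Gamma_pos_of_pos hc))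
    (mul_pos (Real.Gamma_pos_of_pos h1) (Real.Gamma_pos_of_pos h2))

lemma gamma_lb {x : ℝ} (hx : 0 < x) : (1 / 6 : ℝ) ≤ Real.Gamma x := by
  have hmono := Real.Gamma_strictMonoOn_Ici.monotoneOn
  have key : ∀ y : ℝ, 2 ≤ y → (1 : ℝ) ≤ Real.Gamma y := by
    intro y hy
    have := hmono (Set.mem_Ici.mpr le_rfl) (Set.mem_Ici.mpr hy) hy
    rwa [Real.Gamma_two] at this
  rcases le_or_gt 2 x with h | h
  · linarith [key x h]
  · have hx1 : x ≠ 0 := ne_of_gt hx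
    have hx2 : x + 1 ≠ 0 := by linarith
    have e1 : Real.Gamma (x + 1 + 1) = (x + 1) * Real.Gamma (x + 1) := Real.Gamma_add_one hx2
    have e2 : Real.Gamma (x + 1) = x * Real.Gamma x := Real.Gamma_add_one hx1
    have h3 : (1 : ℝ) ≤ Real.Gamma (x + 1 + 1) := key _ (by linarith)
    have hG : 0 < Real.Gamma x := Real.Gamma_pos_of_pos hx
    rw [e1, e2] at h3
    have h6 : (x + 1) * x ≤ 6 := by nlinarith
    have h7 : (x + 1) * (x * Real.Gamma x) ≤ 6 * Real.Gamma x := by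
      calc (x + 1) * (x * Real.Gamma x) = ((x + 1) * x) * Real.Gamma x := by ring
        _ ≤ 6 * Real.Gamma x := mul_le_mul_of_nonneg_right h6 hG.le
    linarith

lemma gamma_fact_lb {y : ℝ} (hy : 2 ≤ y) :
    (Nat.factorial (⌊y⌋₊ - 1) : ℝ) ≤ Real.Gamma y := by
  set k := ⌊y⌋₊ with hk
  have hk2 : 2 ≤ k := Nat.le_floor (by exact_mod_cast hy)
  have hky : (k : ℝ) ≤ y := Nat.floor_le (by linarith)
  have hcast : ((k - 1 : ℕ) : ℝ) + 1 = (k : ℝ) := by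
    have hkpos : 0 < k := lt_of_lt_of_le (by norm_num) hk2
    have : k - 1 + 1 = k := Nat.succ_pred_eq_of_pos hkpos
    exact_mod_cast congrArg (Nat.cast (R := ℝ)) this
  have hGk : Real.Gamma (k : ℝ) = Nat.factorial (k - 1) := by
    rw [← hcast]
    exact_mod_cast Real.Gamma_nat_eq_factorial (k - 1)
  have h2k : (2 : ℝ) ≤ (k : ℝ) := by exact_mod_cast hk2
  have := Real.Gamma_strictMonoOn_Ici.monotoneOn (Set.mem_Ici.mpr h2k)
    (Set.mem_Ici.mpr (le_trans h2k hky)) hky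
  rw [hGk] at this
  exact this

lemma key_summable_aux {a b c d R : ℝ} (ha : 0 < a) (hc : 0 < c) (hb : 0 < b) (hd : 0 ≤ d)
    (hR : 0 < R) : Summable (fun n : ℕ => cw a b c d n * R ^ n) := by
  set M : ℝ := max 1 ((2 * R) ^ b⁻¹) with hM
  have hM1 : (1 : ℝ) ≤ M := le_max_left _ _
  have hM0 : 0 < M := lt_of_lt_of_le one_pos hM1
  have hMb : 2 * R ≤ M ^ b := by
    have h1 : (2 * R) ^ b⁻¹ ≤ M := le_max_right _ _
    have h2 : ((2 * R) ^ b⁻¹) ^ b ≤ M ^ b :=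
      Real.rpow_le_rpow (Real.rpow_nonneg (by linarith) _) h1 hb.le
    rwa [← Real.rpow_mul (by linarith), inv_mul_cancel₀ hb.ne', Real.rpow_one] at h2
  have hMb0 : 0 < M ^ b := Real.rpow_pos_of_pos hM0 _
  set r : ℝ := R / M ^ b with hr
  have hr0 : 0 < r := div_pos hR hMb0
  have hr1 : r < 1 := by
    rw [hr, div_lt_one hMb0]; linarith
  have hGa := Real.Gamma_pos_of_pos ha
  have hGc := Real.Gamma_pos_of_pos hc
  set C : ℝ := 6 * Real.Gamma a * Real.Gamma c * (M ^ (2 : ℝ) * Real.exp M) with hC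
  have hC0 : 0 < C := by positivity
  have hgeo : Summable (fun n : ℕ => C * r ^ n) :=
    (summable_geometric_of_lt_one hr0.le hr1).mul_left C
  obtain ⟨N, hN⟩ := exists_nat_ge (2 / b)
  have hbound : ∀ n : ℕ, N ≤ n → cw a b c d n * R ^ n ≤ C * r ^ n := by
    intro n hn
    have hy2 : (2 : ℝ) ≤ a + ((n : ℝ) + 1) * b := by
      have hNn : (N : ℝ) ≤ (n : ℝ) := by exact_mod_cast hn
      have h0 : 2 / b ≤ (n : ℝ) := le_trans hN hNn
      have h2 : 2 ≤ (n : ℝ) * b := by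
        rw [div_le_iff₀ hb] at h0; linarith
      nlinarith
    set y : ℝ := a + ((n : ℝ) + 1) * b with hy
    set z : ℝ := c + ((n : ℝ) + 1) * d with hz
    have hz0 : 0 < z := by rw [hz]; positivity
    have hGz : (1 / 6 : ℝ) ≤ Real.Gamma z := gamma_lb hz0
    have hGz0 : 0 < Real.Gamma z := lt_of_lt_of_le (by norm_num) hGz
    have hGy0 : 0 < Real.Gamma y := Real.Gamma_pos_of_pos (by linarith)
    set k : ℕ := ⌊y⌋₊ with hk
    have hk2 : 2 ≤ k := Nat.le_floor (by exact_mod_cast hy2)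
    have hfact : (Nat.factorial (k - 1) : ℝ) ≤ Real.Gamma y := gamma_fact_lb hy2
    have hfact0 : (0 : ℝ) < (Nat.factorial (k - 1) : ℝ) := by positivity
    have hMfact : M ^ (k - 1) / (Nat.factorial (k - 1) : ℝ) ≤ Real.exp M :=
      Real.pow_div_factorial_le_exp M hM0.le _
    have hMk : M ^ (k - 1) ≤ Real.exp M * Real.Gamma y := by
      rw [div_le_iff₀ hfact0] at hMfact
      calc M ^ (k - 1) ≤ Real.exp M * (Nat.factorial (k - 1) : ℝ) := hMfact
        _ ≤ Real.exp M * Real.Gamma y := mul_le_mul_of_nonneg_left hfact (Real.exp_pos M).le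
    have hk1cast : ((k - 1 : ℕ) : ℝ) = (k : ℝ) - 1 := by
      have h1 : k - 1 + 1 = k := Nat.succ_pred_eq_of_pos (lt_of_lt_of_le (by norm_num) hk2)
      have h2 := congrArg (Nat.cast (R := ℝ)) h1
      push_cast at h2; linarith
    have hkfloor : y - 1 ≤ (k : ℝ) := by
      have h1 := Nat.lt_floor_add_one y
      rw [← hk] at h1
      linarith
    have hnb : (n : ℝ) * b - 2 ≤ ((k - 1 : ℕ) : ℝ) := by
      rw [hk1cast]
      have h1 : (n : ℝ) * b ≤ y := by rw [hy]; nlinarith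
      linarith
    have hMpow : (M ^ b) ^ (n : ℕ) / M ^ (2 : ℝ) ≤ M ^ (k - 1) := by
      have e1 : (M ^ b) ^ (n : ℕ) / M ^ (2 : ℝ) = M ^ ((n : ℝ) * b - 2) := by
        rw [← Real.rpow_natCast (M ^ b) n, ← Real.rpow_mul hM0.le,
          ← Real.rpow_sub hM0, mul_comm b (n : ℝ)]
      have e2 : M ^ ((k - 1 : ℕ) : ℝ) = M ^ (k - 1 : ℕ) := Real.rpow_natCast M _
      rw [e1, ← e2]
      exact Real.rpow_le_rpow_of_exponent_le hM1 hnb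
    have hM20 : (0 : ℝ) < M ^ (2 : ℝ) := Real.rpow_pos_of_pos hM0 _
    have hP : (M ^ b) ^ (n : ℕ) ≤ Real.Gamma y * (M ^ (2 : ℝ) * Real.exp M) := by
      calc (M ^ b) ^ (n : ℕ) = ((M ^ b) ^ (n : ℕ) / M ^ (2 : ℝ)) * M ^ (2 : ℝ) :=
            (div_mul_cancel₀ _ hM20.ne').symm
        _ ≤ M ^ (k - 1) * M ^ (2 : ℝ) := mul_le_mul_of_nonneg_right hMpow hM20.le
        _ ≤ (Real.exp M * Real.Gamma y) * M ^ (2 : ℝ) := mul_le_mul_of_nonneg_right hMk hM20.le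
        _ = Real.Gamma y * (M ^ (2 : ℝ) * Real.exp M) := by ring
    have hcw : cw a b c d n ≤ 6 * Real.Gamma a * Real.Gamma c / Real.Gamma y := by
      rw [cw, ← hy, ← hz, div_le_div_iff₀ (by positivity) hGy0]
      have h6 : (6 * (Real.Gamma a * Real.Gamma c * Real.Gamma y)) * (1 / 6)
          ≤ (6 * (Real.Gamma a * Real.Gamma c * Real.Gamma y)) * Real.Gamma z :=
        mul_le_mul_of_nonneg_left hGz (by positivity)
      calc Real.Gamma a * Real.Gamma c * Real.Gamma y
          = (6 * (Real.Gamma a * Real.Gamma c * Real.Gamma y)) * (1 / 6) := by ring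
        _ ≤ (6 * (Real.Gamma a * Real.Gamma c * Real.Gamma y)) * Real.Gamma z := h6
        _ = 6 * Real.Gamma a * Real.Gamma c * (Real.Gamma y * Real.Gamma z) := by ring
    have hMbn0 : 0 < (M ^ b) ^ (n : ℕ) := pow_pos hMb0 _
    have hfinal : 6 * Real.Gamma a * Real.Gamma c / Real.Gamma y ≤ C / (M ^ b) ^ (n : ℕ) := by
      rw [div_le_div_iff₀ hGy0 hMbn0, hC]
      calc 6 * Real.Gamma a * Real.Gamma c * (M ^ b) ^ (n : ℕ)
          ≤ 6 * Real.Gamma a * Real.Gamma c * (Real.Gamma y * (M ^ (2 : ℝ) * Real.exp M)) :=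
            mul_le_mul_of_nonneg_left hP (by positivity)
        _ = 6 * Real.Gamma a * Real.Gamma c * (M ^ (2 : ℝ) * Real.exp M) * Real.Gamma y := by ring
    have hRn0 : (0 : ℝ) ≤ R ^ n := by positivity
    calc cw a b c d n * R ^ n
        ≤ (C / (M ^ b) ^ (n : ℕ)) * R ^ n :=
          mul_le_mul_of_nonneg_right (le_trans hcw hfinal) hRn0
      _ = C * r ^ n := by rw [hr, div_pow]; ring
  apply summable_of_isBigO_nat hgeo
  apply Asymptotics.IsBigO.of_bound 1
  filter_upwards [eventually_ge_atTop N] with n hn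
  have h1 := hbound n hn
  have h2 : 0 ≤ cw a b c d n * R ^ n := by
    have := cw_pos ha hc hb.le hd n
    positivity
  have h3 : 0 ≤ C * r ^ n := by positivity
  rw [Real.norm_eq_abs, Real.norm_eq_abs, abs_of_nonneg h2, abs_of_nonneg h3, one_mul]
  exact h1

lemma key_summable {a b c d R : ℝ} (ha : 0 < a) (hc : 0 < c) (hb : 0 ≤ b) (hd : 0 ≤ d)
    (hbd : 0 < b + d) (hR : 0 < R) : Summable (fun n : ℕ => cw a b c d n * R ^ n) := by
  rcases lt_or_ge 0 b with h | h
  · exact key_summable_aux ha hc h hd hR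
  · have hb0 : b = 0 := le_antisymm h hb
    have hd0 : 0 < d := by rw [hb0] at hbd; linarith
    have hsymm : (fun n : ℕ => cw a b c d n * R ^ n) = fun n : ℕ => cw c d a b n * R ^ n := by
      funext n
      simp only [cw]
      rw [mul_comm (Real.Gamma a) (Real.Gamma c),
        mul_comm (Real.Gamma (a + ((n : ℝ) + 1) * b)) (Real.Gamma (c + ((n : ℝ) + 1) * d))]
    rw [hsymm]
    exact key_summable_aux hc ha hd0 hb hR


/-- The normalized four-parameter Wright function
`W_{(a,b),(c,d)}(x) = x + ∑_{n=2}^∞ Γ(a)Γ(c) xⁿ / (Γ(a+(n-1)b)Γ(c+(n-1)d))`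
(as a function of a real variable, evaluated along the real axis). -/
noncomputable def wrightW (a b c d : ℝ) : ℝ → ℝ := fun x =>
  x + ∑' n : ℕ, Real.Gamma a * Real.Gamma c /
    (Real.Gamma (a + ((n : ℝ) + 1) * b) * Real.Gamma (c + ((n : ℝ) + 1) * d)) * x ^ (n + 2)

section Derivs

variable {a b c d : ℝ} (ha : 0 < a) (hc : 0 < c) (hb : 0 ≤ b) (hd : 0 ≤ d) (hbd : 0 < b + d)
include ha hc hb hd hbd

-- master bound sequence
lemma master_summable :
    Summable (fun n : ℕ => ((n : ℝ) + 3) ^ 2 * cw a b c d n * 2 ^ (n + 1)) := by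
  have h8 : Summable (fun n : ℕ => 32 * (cw a b c d n * 8 ^ n)) :=
    (key_summable ha hc hb hd hbd (by norm_num : (0:ℝ) < 8)).mul_left 32
  apply Summable.of_nonneg_of_le _ _ h8
  · intro n
    have := cw_pos ha hc hb hd n
    positivity
  · intro n
    have hcwn := (cw_pos ha hc hb hd n).le
    have hn3 : ((n : ℝ) + 3) ≤ 4 * 2 ^ n := by
      have h1 : (n : ℕ) + 3 ≤ 2 ^ (n + 2) := by
        have := Nat.lt_two_pow_self (n := n + 2)
        omega
      have h2 : ((n : ℝ) + 3) ≤ 2 ^ (n + 2) := by exact_mod_cast h1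
      calc ((n : ℝ) + 3) ≤ 2 ^ (n + 2) := h2
        _ = 4 * 2 ^ n := by ring
    have h2n : (0:ℝ) < 2 ^ n := by positivity
    calc ((n : ℝ) + 3) ^ 2 * cw a b c d n * 2 ^ (n + 1)
        ≤ (4 * 2 ^ n) ^ 2 * cw a b c d n * 2 ^ (n + 1) := by
          apply mul_le_mul_of_nonneg_right _ (by positivity)
          apply mul_le_mul_of_nonneg_right _ hcwn
          have : (0:ℝ) ≤ (n : ℝ) + 3 := by positivity
          exact pow_le_pow_left₀ this hn3 2
      _ = 32 * (cw a b c d n * 8 ^ n) := by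
          rw [show (8:ℝ) ^ n = 2 ^ n * 2 ^ n * 2 ^ n from by rw [← mul_pow, ← mul_pow]; norm_num]
          ring
  
lemma summable_of_le_master (f : ℕ → ℝ) (hf0 : ∀ n, 0 ≤ f n)
    (hf : ∀ n, f n ≤ ((n : ℝ) + 3) ^ 2 * cw a b c d n * 2 ^ (n + 1)) : Summable f :=
  Summable.of_nonneg_of_le hf0 hf (master_summable ha hc hb hd hbd)

lemma wright_hasDerivAt :
    ∀ x ∈ Set.Ioo (-2 : ℝ) 2, HasDerivAt (wrightW a b c d)
      (1 + ∑' n : ℕ, cw a b c d n * (((n : ℝ) + 2) * x ^ (n + 1))) x := by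
  intro x hx
  have hT : HasDerivAt (fun y : ℝ => ∑' n : ℕ, cw a b c d n * y ^ (n + 2))
      (∑' n : ℕ, cw a b c d n * (((n : ℝ) + 2) * x ^ (n + 1))) x := by
    apply hasDerivAt_tsum_of_isPreconnected
      (u := fun n : ℕ => ((n : ℝ) + 3) ^ 2 * cw a b c d n * 2 ^ (n + 1)) (y₀ := 0)
      (master_summable ha hc hb hd hbd) isOpen_Ioo (convex_Ioo _ _).isPreconnected
      (g' := fun n y => cw a b c d n * (((n : ℝ) + 2) * y ^ (n + 1)))
      ?_ ?_ (Set.mem_Ioo.mpr ⟨by norm_num, by norm_num⟩) ?_ hx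
    · intro n y _
      have h := (hasDerivAt_pow (n + 2) y).const_mul (cw a b c d n)
      convert h using 1
      · rfl
      push_cast
      ring
    · intro n y hy
      have hy2 : |y| ≤ 2 := by
        rw [abs_le]; exact ⟨(Set.mem_Ioo.mp hy).1.le, (Set.mem_Ioo.mp hy).2.le⟩
      have hcwn := (cw_pos ha hc hb hd n).le
      rw [Real.norm_eq_abs, abs_mul, abs_mul, abs_of_nonneg hcwn,
        abs_of_nonneg (by positivity : (0:ℝ) ≤ (n : ℝ) + 2), abs_pow]
      calc cw a b c d n * (((n : ℝ) + 2) * |y| ^ (n + 1))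
          ≤ cw a b c d n * (((n : ℝ) + 3) ^ 2 * 2 ^ (n + 1)) := by
            apply mul_le_mul_of_nonneg_left _ hcwn
            have h1 : |y| ^ (n + 1) ≤ 2 ^ (n + 1) := pow_le_pow_left₀ (abs_nonneg y) hy2 _
            have h2 : ((n : ℝ) + 2) ≤ ((n : ℝ) + 3) ^ 2 := by nlinarith [(n.cast_nonneg : (0:ℝ) ≤ n)]
            have h3 : (0:ℝ) ≤ ((n:ℝ) + 2) := by positivity
            calc ((n : ℝ) + 2) * |y| ^ (n + 1) ≤ ((n : ℝ) + 2) * 2 ^ (n + 1) :=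
                  mul_le_mul_of_nonneg_left h1 h3
              _ ≤ ((n : ℝ) + 3) ^ 2 * 2 ^ (n + 1) := mul_le_mul_of_nonneg_right h2 (by positivity)
        _ = ((n : ℝ) + 3) ^ 2 * cw a b c d n * 2 ^ (n + 1) := by ring
    · have hz : (fun n : ℕ => cw a b c d n * (0:ℝ) ^ (n + 2)) = fun _ => (0:ℝ) := by
        funext n; simp
      rw [hz]
      exact summable_zero
  have hid := hasDerivAt_id x
  exact hid.add hT

lemma wrightD_hasDerivAt :
    ∀ x ∈ Set.Ioo (-2 : ℝ) 2,
      HasDerivAt (fun y : ℝ => ∑' n : ℕ, cw a b c d n * (((n : ℝ) + 2) * y ^ (n + 1)))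
        (∑' n : ℕ, cw a b c d n * (((n : ℝ) + 2) * (((n : ℝ) + 1) * x ^ n))) x := by
  intro x hx
  apply hasDerivAt_tsum_of_isPreconnected
    (u := fun n : ℕ => ((n : ℝ) + 3) ^ 2 * cw a b c d n * 2 ^ (n + 1)) (y₀ := 0)
    (master_summable ha hc hb hd hbd) isOpen_Ioo (convex_Ioo _ _).isPreconnected
    (g' := fun n y => cw a b c d n * (((n : ℝ) + 2) * (((n : ℝ) + 1) * y ^ n)))
    ?_ ?_ (Set.mem_Ioo.mpr ⟨by norm_num, by norm_num⟩) ?_ hx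
  · intro n y _
    have h := (hasDerivAt_pow (n + 1) y).const_mul (cw a b c d n * ((n : ℝ) + 2))
    convert h using 1
    · rfl
    · funext z; ring
    · push_cast; ring
  · intro n y hy
    have hy2 : |y| ≤ 2 := by
      rw [abs_le]; exact ⟨(Set.mem_Ioo.mp hy).1.le, (Set.mem_Ioo.mp hy).2.le⟩
    have hcwn := (cw_pos ha hc hb hd n).le
    have hyn : |y| ^ n ≤ 2 ^ (n + 1) := by
      calc |y| ^ n ≤ 2 ^ n := pow_le_pow_left₀ (abs_nonneg y) hy2 _
        _ ≤ 2 ^ (n + 1) := by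
          apply pow_le_pow_right₀ (by norm_num)
          omega
    have h2 : ((n : ℝ) + 2) * ((n : ℝ) + 1) ≤ ((n : ℝ) + 3) ^ 2 := by
      nlinarith [(n.cast_nonneg : (0:ℝ) ≤ n)]
    rw [Real.norm_eq_abs, abs_mul, abs_mul, abs_mul, abs_of_nonneg hcwn,
      abs_of_nonneg (by positivity : (0:ℝ) ≤ (n : ℝ) + 2),
      abs_of_nonneg (by positivity : (0:ℝ) ≤ (n : ℝ) + 1), abs_pow]
    calc cw a b c d n * (((n : ℝ) + 2) * (((n : ℝ) + 1) * |y| ^ n))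
        = (((n : ℝ) + 2) * ((n : ℝ) + 1)) * (|y| ^ n) * cw a b c d n := by ring
      _ ≤ ((n : ℝ) + 3) ^ 2 * 2 ^ (n + 1) * cw a b c d n := by
          apply mul_le_mul_of_nonneg_right _ hcwn
          exact mul_le_mul h2 hyn (by positivity) (by positivity)
      _ = ((n : ℝ) + 3) ^ 2 * cw a b c d n * 2 ^ (n + 1) := by ring
  · have hz : (fun n : ℕ => cw a b c d n * (((n : ℝ) + 2) * (0:ℝ) ^ (n + 1))) = fun _ => (0:ℝ) := by
      funext n; simp
    rw [hz]
    exact summable_zero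

lemma wright_deriv_eq :
    deriv (wrightW a b c d) 1 = 1 + ∑' n : ℕ, cw a b c d n * ((n : ℝ) + 2) := by
  have h := (wright_hasDerivAt ha hc hb hd hbd 1 (by norm_num)).deriv
  rw [h]
  congr 1
  exact tsum_congr fun n => by rw [one_pow, mul_one]

lemma wright_deriv2_eq :
    iteratedDeriv 2 (wrightW a b c d) 1
      = ∑' n : ℕ, cw a b c d n * (((n : ℝ) + 2) * ((n : ℝ) + 1)) := by
  have h1mem : (1 : ℝ) ∈ Set.Ioo (-2 : ℝ) 2 := by norm_num
  rw [show (2 : ℕ) = 1 + 1 from rfl, iteratedDeriv_succ, iteratedDeriv_one]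
  have hev : deriv (wrightW a b c d)
      =ᶠ[nhds 1] (fun x => 1 + ∑' n : ℕ, cw a b c d n * (((n : ℝ) + 2) * x ^ (n + 1))) := by
    filter_upwards [isOpen_Ioo.mem_nhds h1mem] with x hx
    exact (wright_hasDerivAt ha hc hb hd hbd x hx).deriv
  rw [hev.deriv_eq]
  have hD : HasDerivAt
      (fun x : ℝ => 1 + ∑' n : ℕ, cw a b c d n * (((n : ℝ) + 2) * x ^ (n + 1)))
      (0 + ∑' n : ℕ, cw a b c d n * (((n : ℝ) + 2) * (((n : ℝ) + 1) * (1:ℝ) ^ n))) 1 :=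
    (hasDerivAt_const (1:ℝ) (1:ℝ)).add (wrightD_hasDerivAt ha hc hb hd hbd 1 h1mem)
  rw [hD.deriv, zero_add]
  exact tsum_congr fun n => by rw [one_pow, mul_one]

end Derivs

/-- key estimate for close-to-convexity of L(f) when f ∈ K_H^o,
i.e. |Aₙ| ≤ (n+1)/2 and |Bₙ| ≤ (n−1)/2 for n ≥ 2. -/
theorem Lf_convex_to_close_to_convex_estimate (α₁ β₁ γ₁ δ₁ α₂ β₂ γ₂ δ₂ : ℝ) (A B : ℕ → ℂ)
    (hβ₁ : 0 ≤ β₁) (hδ₁ : 0 ≤ δ₁) (hβδ₁ : 0 < β₁ + δ₁)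
    (hβ₂ : 0 ≤ β₂) (hδ₂ : 0 ≤ δ₂) (hβδ₂ : 0 < β₂ + δ₂)
    (hα₁ : 0 < α₁) (hγ₁ : 0 < γ₁) (hα₂ : 0 < α₂) (hγ₂ : 0 < γ₂)
    (hA : ∀ n : ℕ, 2 ≤ n → ‖A n‖ ≤ ((n : ℝ) + 1) / 2)
    (hB : ∀ n : ℕ, 2 ≤ n → ‖B n‖ ≤ ((n : ℝ) - 1) / 2)
    (hyp : iteratedDeriv 2 (wrightW α₁ β₁ γ₁ δ₁) 1
        + 2 * deriv (wrightW α₁ β₁ γ₁ δ₁) 1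
        + iteratedDeriv 2 (wrightW α₂ β₂ γ₂ δ₂) 1 ≤ 4) :
    ∀ ε : ℂ, ‖ε‖ = 1 →
      ∑' n : ℕ, ((n : ℝ) + 2) *
        ‖((Real.Gamma α₁ * Real.Gamma γ₁ /
            (Real.Gamma (α₁ + ((n : ℝ) + 1) * β₁) * Real.Gamma (γ₁ + ((n : ℝ) + 1) * δ₁)) : ℝ) : ℂ) * A (n + 2)
          + ε * ((Real.Gamma α₂ * Real.Gamma γ₂ /
            (Real.Gamma (α₂ + ((n : ℝ) + 1) * β₂) * Real.Gamma (γ₂ + ((n : ℝ) + 1) * δ₂)) : ℝ) : ℂ) * B (n + 2)‖ ≤ 1 := by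
  intro ε hε
  set c : ℕ → ℝ := cw α₁ β₁ γ₁ δ₁ with hcdef
  set d : ℕ → ℝ := cw α₂ β₂ γ₂ δ₂ with hddef
  have hc0 : ∀ n, 0 < c n := fun n => cw_pos hα₁ hγ₁ hβ₁ hδ₁ n
  have hd0 : ∀ n, 0 < d n := fun n => cw_pos hα₂ hγ₂ hβ₂ hδ₂ n
  -- summability facts
  have hM1 := master_summable hα₁ hγ₁ hβ₁ hδ₁ hβδ₁
  have hM2 := master_summable hα₂ hγ₂ hβ₂ hδ₂ hβδ₂
  have haux : ∀ n : ℕ, (0:ℝ) ≤ (n:ℝ) := fun n => n.cast_nonneg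
  rw [← hcdef] at hM1
  rw [← hddef] at hM2
  have hgen : ∀ (e : ℕ → ℝ) (P : ℕ → ℝ), (∀ n, 0 < e n) → (∀ n, 0 ≤ P n) →
      (∀ n, P n ≤ ((n:ℝ)+3)^2) →
      Summable (fun n : ℕ => ((n : ℝ) + 3) ^ 2 * e n * 2 ^ (n + 1)) →
      Summable (fun n : ℕ => e n * P n) := by
    intro e P he hP hP3 hs
    apply Summable.of_nonneg_of_le (fun n => mul_nonneg (he n).le (hP n)) _ hs
    intro n
    have h2 : (1:ℝ) ≤ 2 ^ (n+1) := one_le_pow₀ (by norm_num)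
    have hstep : P n ≤ ((n:ℝ)+3)^2 * 2^(n+1) := by
      nlinarith [hP3 n, sq_nonneg ((n:ℝ)+3), hP n]
    calc e n * P n ≤ e n * (((n:ℝ)+3)^2 * 2^(n+1)) :=
          mul_le_mul_of_nonneg_left hstep (he n).le
      _ = ((n:ℝ)+3)^2 * e n * 2^(n+1) := by ring
  have hSc2 : Summable (fun n : ℕ => c n * (((n : ℝ) + 2) * ((n : ℝ) + 1))) :=
    hgen c _ hc0 (fun n => by positivity) (fun n => by nlinarith [haux n]) hM1
  have hSc1 : Summable (fun n : ℕ => c n * ((n : ℝ) + 2)) :=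
    hgen c _ hc0 (fun n => by positivity) (fun n => by nlinarith [haux n]) hM1
  have hSd2 : Summable (fun n : ℕ => d n * (((n : ℝ) + 2) * ((n : ℝ) + 1))) :=
    hgen d _ hd0 (fun n => by positivity) (fun n => by nlinarith [haux n]) hM2
  -- rewrite hypothesis
  rw [wright_deriv_eq hα₁ hγ₁ hβ₁ hδ₁ hβδ₁, wright_deriv2_eq hα₁ hγ₁ hβ₁ hδ₁ hβδ₁,
    wright_deriv2_eq hα₂ hγ₂ hβ₂ hδ₂ hβδ₂] at hyp
  rw [← hcdef, ← hddef] at hyp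
  have hkey : (∑' n : ℕ, c n * (((n : ℝ) + 2) * ((n : ℝ) + 1)))
      + 2 * (∑' n : ℕ, c n * ((n : ℝ) + 2))
      + (∑' n : ℕ, d n * (((n : ℝ) + 2) * ((n : ℝ) + 1))) ≤ 2 := by linarith
  -- majorant
  set m : ℕ → ℝ := fun n =>
    (1/2) * ((c n * (((n : ℝ) + 2) * ((n : ℝ) + 1)) + 2 * (c n * ((n : ℝ) + 2)))
      + d n * (((n : ℝ) + 2) * ((n : ℝ) + 1))) with hmdef
  have hSm : Summable m := (((hSc2.add (hSc1.mul_left 2)).add hSd2).mul_left (1/2))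
  have htsm : ∑' n, m n ≤ 1 := by
    have e1 : ∑' n, m n = (1/2) * ((∑' n : ℕ, c n * (((n : ℝ) + 2) * ((n : ℝ) + 1)))
        + 2 * (∑' n : ℕ, c n * ((n : ℝ) + 2))
        + (∑' n : ℕ, d n * (((n : ℝ) + 2) * ((n : ℝ) + 1)))) := by
      rw [hmdef, tsum_mul_left]
      congr 1
      rw [Summable.tsum_add (hSc2.add (hSc1.mul_left 2)) hSd2, Summable.tsum_add hSc2 (hSc1.mul_left 2),
        tsum_mul_left]
    rw [e1]; linarith
  -- the terms of the goal
  show ∑' n : ℕ, ((n : ℝ) + 2) * ‖((c n : ℝ) : ℂ) * A (n + 2) + ε * ((d n : ℝ) : ℂ) * B (n + 2)‖ ≤ 1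
  have hterm : ∀ n : ℕ, ((n : ℝ) + 2) * ‖((c n : ℝ) : ℂ) * A (n + 2) + ε * ((d n : ℝ) : ℂ) * B (n + 2)‖ ≤ m n := by
    intro n
    have hAn : ‖A (n + 2)‖ ≤ ((n : ℝ) + 3) / 2 := by
      have := hA (n + 2) (by omega)
      push_cast at this
      linarith
    have hBn : ‖B (n + 2)‖ ≤ ((n : ℝ) + 1) / 2 := by
      have := hB (n + 2) (by omega)
      push_cast at this
      linarith
    have h1 : ‖((c n : ℝ) : ℂ) * A (n + 2) + ε * ((d n : ℝ) : ℂ) * B (n + 2)‖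
        ≤ c n * ‖A (n + 2)‖ + d n * ‖B (n + 2)‖ := by
      calc ‖((c n : ℝ) : ℂ) * A (n + 2) + ε * ((d n : ℝ) : ℂ) * B (n + 2)‖
          ≤ ‖((c n : ℝ) : ℂ) * A (n + 2)‖ + ‖ε * ((d n : ℝ) : ℂ) * B (n + 2)‖ := norm_add_le _ _
        _ = c n * ‖A (n + 2)‖ + d n * ‖B (n + 2)‖ := by
            rw [norm_mul, norm_mul, norm_mul, hε, Complex.norm_real, Complex.norm_real,
              Real.norm_eq_abs, Real.norm_eq_abs, abs_of_nonneg (hc0 n).le,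
              abs_of_nonneg (hd0 n).le, one_mul]
    have h2 : c n * ‖A (n + 2)‖ + d n * ‖B (n + 2)‖
        ≤ c n * (((n : ℝ) + 3) / 2) + d n * (((n : ℝ) + 1) / 2) := by
      have := mul_le_mul_of_nonneg_left hAn (hc0 n).le
      have := mul_le_mul_of_nonneg_left hBn (hd0 n).le
      linarith
    have h3 : ((n : ℝ) + 2) * ‖((c n : ℝ) : ℂ) * A (n + 2) + ε * ((d n : ℝ) : ℂ) * B (n + 2)‖
        ≤ ((n : ℝ) + 2) * (c n * (((n : ℝ) + 3) / 2) + d n * (((n : ℝ) + 1) / 2)) :=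
      mul_le_mul_of_nonneg_left (le_trans h1 h2) (by positivity)
    calc ((n : ℝ) + 2) * ‖((c n : ℝ) : ℂ) * A (n + 2) + ε * ((d n : ℝ) : ℂ) * B (n + 2)‖
        ≤ ((n : ℝ) + 2) * (c n * (((n : ℝ) + 3) / 2) + d n * (((n : ℝ) + 1) / 2)) := h3
      _ = m n := by rw [hmdef]; ring
  have hSt : Summable (fun n : ℕ =>
      ((n : ℝ) + 2) * ‖((c n : ℝ) : ℂ) * A (n + 2) + ε * ((d n : ℝ) : ℂ) * B (n + 2)‖) :=
    Summable.of_nonneg_of_le (fun n => by positivity) hterm hSm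
  exact le_trans (Summable.tsum_le_tsum hterm hSt hSm) htsm
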